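/- Let G be a group and ω : G³ → ℂˣ a normalized 3-cocycle. Define Ξ(g,h) := ω(h⁻¹,g⁻¹,g)/ω(h⁻¹g⁻¹,g,h). Then for all g,h,k ∈ G: ω(k⁻¹,h⁻¹,g⁻¹) = ω(g,h,k) · Ξ(g,hk)·Ξ(h,k) / (Ξ(g,h)·Ξ(gh,k)). In compact notation, ω̂ = ω·dΞ, where ω̂(g,h,k) := ω(k⁻¹,h⁻¹,g⁻¹). -/
import Mathlib


/-- First part of Lemma 7: for a normalized 3-cocycle `ω` and
`Ξ(g,h) = ω(h⁻¹,g⁻¹,g)/ω(h⁻¹g⁻¹,g,h)`, one has `ω̂ = ω · dΞ`, i.e.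
`ω(k⁻¹,h⁻¹,g⁻¹) = ω(g,h,k)·Ξ(g,hk)Ξ(h,k)/(Ξ(g,h)Ξ(gh,k))`. -/
theorem omega_hat_eq_omega_dXi
    {G : Type*} [Group G]
    (ω : G → G → G → ℂˣ)
    (hω : ∀ g h k l : G,
      ω (g * h) k l * ω g h (k * l) = ω g h k * ω g (h * k) l * ω h k l)
    (hnorm : ∀ g h : G, ω 1 g h = 1 ∧ ω g 1 h = 1 ∧ ω g h 1 = 1)
    (Ξ : G → G → ℂˣ)
    (hΞ : ∀ g h : G, Ξ g h = ω h⁻¹ g⁻¹ g / ω (h⁻¹ * g⁻¹) g h) :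
    ∀ g h k : G,
      ω k⁻¹ h⁻¹ g⁻¹ =
        ω g h k * (Ξ g (h * k) * Ξ h k) / (Ξ g h * Ξ (g * h) k) := by
  have hn3 : ∀ g h : G, ω g h 1 = 1 := fun g h => (hnorm g h).2.2
  intro g h k
  have e1 := hω k⁻¹ h⁻¹ g⁻¹ g
  have e2 := hω k⁻¹ (h⁻¹ * g⁻¹) g h
  have e3 := hω (k⁻¹ * h⁻¹ * g⁻¹) g h k
  simp only [inv_mul_cancel, hn3, mul_one, mul_assoc, inv_mul_cancel_left] at e1 e2 e3
  rw [hΞ, hΞ, hΞ, hΞ]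
  simp only [mul_inv_rev, mul_assoc] at *
  have c1 := congrArg (Units.val) e1
  have c2 := congrArg (Units.val) e2
  have c3 := congrArg (Units.val) e3
  push_cast at c1 c2 c3
  refine Units.ext ?_
  push_cast
  field_simp
  simp only [one_div, div_eq_mul_inv, one_mul, mul_assoc]
  linear_combination
    (-((ω g h k : ℂ) * (ω k⁻¹ h⁻¹ h : ℂ) * (ω (h⁻¹ * g⁻¹) g h : ℂ) *
        (ω (k⁻¹ * (h⁻¹ * g⁻¹)) (g * h) k : ℂ))) * c1 +
    ((ω k⁻¹ h⁻¹ g⁻¹ : ℂ) * (ω h⁻¹ g⁻¹ g : ℂ) * (ω g h k : ℂ) *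
        (ω (k⁻¹ * (h⁻¹ * g⁻¹)) (g * h) k : ℂ)) * c2 +
    ((ω k⁻¹ h⁻¹ g⁻¹ : ℂ) * (ω h⁻¹ g⁻¹ g : ℂ) *
        (ω k⁻¹ (h⁻¹ * g⁻¹) (g * h) : ℂ)) * c3
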